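/- Let K be a Markov kernel on a measurable space (Y,𝒴), let D ∈ 𝒴, and let r: ℕ → [0,∞). Suppose that for every y ∈ Y the chain started at y hits D almost surely, i.e. P_y(σ_D < ∞) = 1. Define v_r(y) = E_y[r(σ_D)]. Then for every y ∈ Y, the identity E_y[Σ_{k=0}^{σ_D} r(k)] = E_y[Σ_{k=0}^{σ_D} v_r(Y_k)] holds in [0,∞]. -/

import Mathlib

open MeasureTheory ProbabilityTheory Filter
open scoped ENNReal ENat

noncomputable section

variable {Y : Type*} [MeasurableSpace Y]

/-- `μ` is the family of laws of the canonical Markov chain with kernel `K`. -/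
structure IsMarkovChain (K : Kernel Y Y) (μ : Y → Measure (ℕ → Y)) : Prop where
  isProb : ∀ y, IsProbabilityMeasure (μ y)
  init : ∀ y, (μ y).map (fun ω => ω 0) = Measure.dirac y
  markov : ∀ (y : Y) (n : ℕ) (g : (ℕ → Y) → ℝ≥0∞) (f : Y → ℝ≥0∞),
      Measurable[MeasurableSpace.comap (fun ω (i : Fin (n + 1)) => ω i) inferInstance] g →
      Measurable f →
      ∫⁻ ω, g ω * f (ω (n + 1)) ∂(μ y) = ∫⁻ ω, g ω * ∫⁻ z, f z ∂(K (ω n)) ∂(μ y)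

/-- First hitting time of a set `D` (with `inf ∅ = ⊤`). -/
def hit (D : Set Y) (ω : ℕ → Y) : ℕ∞ :=
  sInf ((fun k : ℕ => (k : ℕ∞)) '' {k | ω k ∈ D})

/-- Evaluation of `r` at an extended natural number (value `0` at `⊤`, irrelevant
here since the hitting time is a.s. finite). -/
def rEval (r : ℕ → ℝ) : ℕ∞ → ℝ≥0∞ :=
  fun m => match m with
  | ⊤ => 0
  | (k : ℕ) => ENNReal.ofReal (r k)

/-! ### Auxiliary material -/

set_option linter.unusedSectionVars false in
lemma hit_le_iff (D : Set Y) (ω : ℕ → Y) (n : ℕ) :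
    (n : ℕ∞) ≤ hit D ω ↔ ∀ i < n, ω i ∉ D := by
  rw [hit, le_sInf_iff]
  simp only [Set.mem_image, Set.mem_setOf_eq, forall_exists_index, and_imp]
  constructor
  · intro h i hi hiD
    have := h _ i hiD rfl
    exact absurd (Nat.cast_le.mp this) (by omega)
  · rintro h b x hx rfl
    by_contra hb
    have : x < n := Nat.cast_lt.mp (not_le.mp hb)
    exact h x this hx

set_option linter.unusedSectionVars false in
lemma hit_eq_iff (D : Set Y) (ω : ℕ → Y) (N : ℕ) :
    hit D ω = (N : ℕ∞) ↔ ω N ∈ D ∧ ∀ i < N, ω i ∉ D := by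
  constructor
  · intro h
    have h1 : ∀ i < N, ω i ∉ D := (hit_le_iff D ω N).mp h.ge
    refine ⟨?_, h1⟩
    by_contra hN
    have h2 : ∀ i < N + 1, ω i ∉ D := by
      intro i hi
      rcases Nat.lt_succ_iff_lt_or_eq.mp hi with hh | rfl
      · exact h1 i hh
      · exact hN
    have := (hit_le_iff D ω (N+1)).mpr h2
    rw [h] at this
    exact absurd (Nat.cast_le.mp this) (by omega)
  · rintro ⟨h1, h2⟩
    refine le_antisymm ?_ ((hit_le_iff D ω N).mpr h2)
    exact sInf_le ⟨N, h1, rfl⟩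

set_option linter.unusedSectionVars false in
lemma hit_lt_top_iff (D : Set Y) (ω : ℕ → Y) :
    hit D ω < ⊤ ↔ ∃ k, ω k ∈ D := by
  rw [lt_top_iff_ne_top, ne_eq, hit, sInf_eq_top]
  simp only [Set.mem_image, Set.mem_setOf_eq, forall_exists_index, and_imp]
  constructor
  · intro h
    by_contra hc
    push_neg at hc
    exact h (fun b x hx _ => absurd hx (hc x))
  · rintro ⟨k, hk⟩ h
    exact (WithTop.natCast_ne_top k) (h _ k hk rfl)

/-- The shift of a path by `k` steps. -/
def theta (k : ℕ) (ω : ℕ → Y) : ℕ → Y := fun n => ω (k + n)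

set_option linter.unusedSectionVars false in
lemma hit_theta (D : Set Y) (ω : ℕ → Y) (k N : ℕ) (hk : k ≤ N)
    (h : hit D ω = (N : ℕ∞)) : hit D (theta k ω) = ((N - k : ℕ) : ℕ∞) := by
  obtain ⟨h1, h2⟩ := (hit_eq_iff D ω N).mp h
  rw [hit_eq_iff]
  constructor
  · show ω (k + (N - k)) ∈ D
    have : k + (N - k) = N := by omega
    rw [this]; exact h1
  · intro i hi
    exact h2 (k + i) (by omega)

/-- Iterated kernel functional: `Phi K j f z = E[∏_{i ≤ j} f i (Y_i) | Y_0 = z]`. -/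
def Phi (K : Kernel Y Y) : ℕ → (ℕ → Y → ℝ≥0∞) → Y → ℝ≥0∞
  | 0, f, z => f 0 z
  | (j+1), f, z => f 0 z * ∫⁻ w, Phi K j (fun i => f (i+1)) w ∂(K z)

lemma measurable_Phi (K : Kernel Y Y) [IsMarkovKernel K] :
    ∀ (j : ℕ) (f : ℕ → Y → ℝ≥0∞), (∀ i, Measurable (f i)) → Measurable (Phi K j f) := by
  intro j
  induction j with
  | zero => intro f hf; exact hf 0
  | succ j ih =>
    intro f hf
    exact (hf 0).mul ((ih (fun i => f (i+1)) (fun i => hf (i+1))).lintegral_kernel)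

set_option linter.unusedSectionVars false in
lemma measurable_comap_pi (k : ℕ) :
    Measurable[MeasurableSpace.comap (fun (ω : ℕ → Y) (i : Fin (k + 1)) => ω i) inferInstance]
      (fun (ω : ℕ → Y) (i : Fin (k + 1)) => ω i) :=
  fun _ ht => ⟨_, ht, rfl⟩

set_option linter.unusedSectionVars false in
lemma meas_eval (k n : ℕ) (hn : n ≤ k) :
    Measurable[MeasurableSpace.comap (fun (ω : ℕ → Y) (i : Fin (k + 1)) => ω i) inferInstance]
      (fun ω : ℕ → Y => ω n) := by
  have : (fun ω : ℕ → Y => ω n)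
      = (fun x : Fin (k+1) → Y => x ⟨n, by omega⟩)
        ∘ (fun (ω : ℕ → Y) (i : Fin (k + 1)) => ω i) := rfl
  rw [this]
  exact (measurable_pi_apply _).comp (measurable_comap_pi k)

set_option linter.unusedSectionVars false in
lemma comap_mono (k : ℕ) :
    (MeasurableSpace.comap (fun (ω : ℕ → Y) (i : Fin (k + 1)) => ω i) inferInstance
        : MeasurableSpace (ℕ → Y))
      ≤ MeasurableSpace.comap (fun (ω : ℕ → Y) (i : Fin (k + 2)) => ω i) inferInstance := by
  rintro s ⟨t, ht, rfl⟩
  refine ⟨(fun x : Fin (k+2) → Y => fun i : Fin (k+1) => x i.castSucc) ⁻¹' t,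
    (measurable_pi_lambda _ fun i => measurable_pi_apply _) ht, ?_⟩
  rfl

/-- The fundamental consequence of the Markov property: the expectation of a product
of functions of `Y_k, …, Y_{k+j}` times a function of the past factors through `Phi`. -/
lemma markov_prod {K : Kernel Y Y} [IsMarkovKernel K] {μ : Y → Measure (ℕ → Y)}
    (hμ : IsMarkovChain K μ) :
    ∀ (j : ℕ) (f : ℕ → Y → ℝ≥0∞), (∀ i, Measurable (f i)) →
    ∀ (k : ℕ) (g : (ℕ → Y) → ℝ≥0∞),
      Measurable[MeasurableSpace.comap (fun (ω : ℕ → Y) (i : Fin (k + 1)) => ω i)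
        inferInstance] g →
      ∀ y, ∫⁻ ω, g ω * ∏ i ∈ Finset.range (j+1), f i (ω (k+i)) ∂(μ y)
          = ∫⁻ ω, g ω * Phi K j f (ω k) ∂(μ y) := by
  intro j
  induction j with
  | zero =>
    intro f hf k g hg y
    simp [Phi]
  | succ j ih =>
    intro f hf k g hg y
    have hg' : Measurable[MeasurableSpace.comap (fun (ω : ℕ → Y) (i : Fin (k + 1)) => ω i)
        inferInstance] (fun ω => g ω * f 0 (ω k)) :=
      hg.mul ((hf 0).comp (meas_eval k k le_rfl))
    have hg'' : Measurable[MeasurableSpace.comap (fun (ω : ℕ → Y) (i : Fin (k + 2)) => ω i)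
        inferInstance] (fun ω => g ω * f 0 (ω k)) :=
      hg'.mono (comap_mono k) le_rfl
    have step1 : ∫⁻ ω, g ω * ∏ i ∈ Finset.range (j+2), f i (ω (k+i)) ∂(μ y)
        = ∫⁻ ω, (g ω * f 0 (ω k))
            * ∏ i ∈ Finset.range (j+1), (fun i => f (i+1)) i (ω ((k+1)+i)) ∂(μ y) := by
      apply lintegral_congr
      intro ω
      have hre : (∏ i ∈ Finset.range (j+1), f (i+1) (ω (k+(i+1))))
          = ∏ i ∈ Finset.range (j+1), f (i+1) (ω ((k+1)+i)) :=
        Finset.prod_congr rfl (fun i _ => by rw [show k + (i+1) = (k+1)+i from by omega])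
      rw [Finset.prod_range_succ' (fun i => f i (ω (k+i))) (j+1)]
      simp only [Nat.add_zero]
      rw [hre]
      ring
    have step2 := ih (fun i => f (i+1)) (fun i => hf (i+1)) (k+1) (fun ω => g ω * f 0 (ω k)) hg'' y
    have step3 := hμ.markov y k (fun ω => g ω * f 0 (ω k)) (Phi K j (fun i => f (i+1))) hg'
      (measurable_Phi K j _ (fun i => hf (i+1)))
    rw [step1, step2, step3]
    apply lintegral_congr
    intro ω
    show g ω * f 0 (ω k) * _ = g ω * (f 0 (ω k) * _)
    ring

/-- `Phi` computes the expectation of the product along the chain. -/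
lemma Phi_eq {K : Kernel Y Y} [IsMarkovKernel K] {μ : Y → Measure (ℕ → Y)}
    (hμ : IsMarkovChain K μ) (j : ℕ) (f : ℕ → Y → ℝ≥0∞) (hf : ∀ i, Measurable (f i)) (z : Y) :
    ∫⁻ ω, ∏ i ∈ Finset.range (j+1), f i (ω (0+i)) ∂(μ z) = Phi K j f z := by
  have h := markov_prod hμ j f hf 0 (fun _ => 1) measurable_const z
  simp only [one_mul] at h
  rw [h]
  have hm : Measurable (Phi K j f) := measurable_Phi K j f hf
  calc ∫⁻ ω, Phi K j f (ω 0) ∂(μ z)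
      = ∫⁻ x, Phi K j f x ∂((μ z).map (fun ω => ω 0)) :=
        (lintegral_map hm (measurable_pi_apply 0)).symm
    _ = Phi K j f z := by rw [hμ.init z, lintegral_dirac' _ hm]

open Classical in
/-- The elementary functions expressing `{hit D ∘ θ_k = j}` as a product. -/
def fD (D : Set Y) (j : ℕ) : ℕ → Y → ℝ≥0∞ :=
  fun i z => if i < j then (if z ∈ D then 0 else 1) else (if z ∈ D then 1 else 0)

lemma measurable_fD (D : Set Y) (hD : MeasurableSet D) (j i : ℕ) : Measurable (fD D j i) := by
  classical
  unfold fD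
  by_cases h : i < j <;> simp only [h, if_true, if_false] <;>
    exact Measurable.ite hD measurable_const measurable_const

set_option linter.unusedSectionVars false in
lemma prod_fD_eq (D : Set Y) (j k : ℕ) (ω : ℕ → Y) :
    (∏ i ∈ Finset.range (j+1), fD D j i (ω (k+i)))
      = if hit D (theta k ω) = (j : ℕ∞) then 1 else 0 := by
  classical
  by_cases h : hit D (theta k ω) = (j : ℕ∞)
  · rw [if_pos h]
    obtain ⟨h1, h2⟩ := (hit_eq_iff D (theta k ω) j).mp h
    apply Finset.prod_eq_one
    intro i hi
    rcases Nat.lt_succ_iff_lt_or_eq.mp (Finset.mem_range.mp hi) with hij | rfl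
    · have : ω (k+i) ∉ D := h2 i hij
      simp [fD, hij, this]
    · have : ω (k+i) ∈ D := h1
      simp [fD, this]
  · rw [if_neg h]
    rw [hit_eq_iff] at h
    push_neg at h
    by_cases hj : (theta k ω) j ∈ D
    · obtain ⟨i, hij, hiD⟩ := h hj
      refine Finset.prod_eq_zero (Finset.mem_range.mpr (by omega : i < j + 1)) ?_
      have : ω (k+i) ∈ D := hiD
      simp [fD, hij, this]
    · refine Finset.prod_eq_zero (Finset.mem_range.mpr (by omega : j < j + 1)) ?_
      have : ω (k+j) ∉ D := hj
      simp [fD, this]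

lemma rEval_eq_tsum (r : ℕ → ℝ) (m : ℕ∞) :
    rEval r m = ∑' j : ℕ, ENNReal.ofReal (r j) * (if m = (j : ℕ∞) then 1 else 0) := by
  cases m with
  | top => simp [rEval]; rfl
  | coe N =>
    rw [tsum_eq_single N]
    · simp [rEval]
    · intro j hj
      have : ((N : ℕ∞) : ℕ∞) ≠ (j : ℕ∞) := by
        exact_mod_cast fun hh => hj (by exact_mod_cast hh.symm)
      simp [this]

set_option linter.unusedSectionVars false in
lemma rEval_theta_eq (D : Set Y) (r : ℕ → ℝ) (k : ℕ) (ω : ℕ → Y) :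
    rEval r (hit D (theta k ω))
      = ∑' j : ℕ, ENNReal.ofReal (r j) * ∏ i ∈ Finset.range (j+1), fD D j i (ω (k+i)) := by
  rw [rEval_eq_tsum]
  congr 1
  funext j
  rw [prod_fD_eq]

lemma measurable_prod_fD (D : Set Y) (hD : MeasurableSet D) (j k : ℕ) :
    Measurable (fun ω : ℕ → Y => ∏ i ∈ Finset.range (j+1), fD D j i (ω (k+i))) :=
  Finset.measurable_prod _ (fun i _ => (measurable_fD D hD j i).comp (measurable_pi_apply _))

lemma measurable_rEval_theta (D : Set Y) (hD : MeasurableSet D) (r : ℕ → ℝ) (k : ℕ) :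
    Measurable (fun ω : ℕ → Y => rEval r (hit D (theta k ω))) := by
  have : (fun ω : ℕ → Y => rEval r (hit D (theta k ω)))
      = fun ω => ∑' j : ℕ, ENNReal.ofReal (r j)
          * ∏ i ∈ Finset.range (j+1), fD D j i (ω (k+i)) :=
    funext (rEval_theta_eq D r k)
  rw [this]
  exact Measurable.ennreal_tsum (fun j => measurable_const.mul (measurable_prod_fD D hD j k))

open Classical in
/-- Indicator of the event `{k ≤ hit D}`. -/
def gD (D : Set Y) (k : ℕ) (ω : ℕ → Y) : ℝ≥0∞ :=
  ∏ i ∈ Finset.range k, if ω i ∈ D then 0 else 1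

set_option linter.unusedSectionVars false in
lemma ite_le_hit (D : Set Y) (k : ℕ) (ω : ℕ → Y) (c : ℝ≥0∞) :
    (if (k : ℕ∞) ≤ hit D ω then c else 0) = gD D k ω * c := by
  classical
  by_cases h : (k : ℕ∞) ≤ hit D ω
  · rw [if_pos h]
    have : gD D k ω = 1 := by
      apply Finset.prod_eq_one
      intro i hi
      have := (hit_le_iff D ω k).mp h i (Finset.mem_range.mp hi)
      simp [this]
    rw [this, one_mul]
  · rw [if_neg h]
    rw [hit_le_iff] at h
    push_neg at h
    obtain ⟨i, hik, hiD⟩ := h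
    have : gD D k ω = 0 := Finset.prod_eq_zero (Finset.mem_range.mpr hik) (by simp [hiD])
    rw [this, zero_mul]

lemma measurable_gD (D : Set Y) (hD : MeasurableSet D) (k : ℕ) : Measurable (gD D k) := by
  classical
  unfold gD
  exact Finset.measurable_prod _ (fun i _ =>
    Measurable.ite ((measurable_pi_apply i) hD) measurable_const measurable_const)

lemma measurable_gD_comap (D : Set Y) (hD : MeasurableSet D) (k : ℕ) :
    Measurable[MeasurableSpace.comap (fun (ω : ℕ → Y) (i : Fin (k + 1)) => ω i)
      inferInstance] (gD D k) := by
  classical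
  unfold gD
  exact Finset.measurable_prod _ (fun i hi =>
    Measurable.ite ((meas_eval k i (le_of_lt (Finset.mem_range.mp hi))) hD)
      measurable_const measurable_const)

lemma vr_eq {K : Kernel Y Y} [IsMarkovKernel K] {μ : Y → Measure (ℕ → Y)}
    (hμ : IsMarkovChain K μ) (D : Set Y) (hD : MeasurableSet D) (r : ℕ → ℝ)
    (vr : Y → ℝ≥0∞) (hvr : ∀ y, vr y = ∫⁻ ω, rEval r (hit D ω) ∂(μ y)) (z : Y) :
    vr z = ∑' j : ℕ, ENNReal.ofReal (r j) * Phi K j (fD D j) z := by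
  rw [hvr z]
  have hpt : ∀ ω : ℕ → Y, rEval r (hit D ω)
      = ∑' j : ℕ, ENNReal.ofReal (r j) * ∏ i ∈ Finset.range (j+1), fD D j i (ω (0+i)) := by
    intro ω
    have hθ : theta 0 ω = ω := funext fun n => congrArg ω (Nat.zero_add n)
    calc rEval r (hit D ω) = rEval r (hit D (theta 0 ω)) := by rw [hθ]
      _ = _ := rEval_theta_eq D r 0 ω
  have hmeas : ∀ j : ℕ, AEMeasurable (fun ω : ℕ → Y => ENNReal.ofReal (r j)
      * ∏ i ∈ Finset.range (j+1), fD D j i (ω (0+i))) (μ z) := fun j =>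
    ((measurable_prod_fD D hD j 0).const_mul (ENNReal.ofReal (r j))).aemeasurable
  rw [lintegral_congr hpt,
    lintegral_tsum hmeas]
  congr 1
  funext j
  rw [lintegral_const_mul _ (measurable_prod_fD D hD j 0),
    Phi_eq hμ j (fD D j) (measurable_fD D hD j) z]

lemma key_step {K : Kernel Y Y} [IsMarkovKernel K] {μ : Y → Measure (ℕ → Y)}
    (hμ : IsMarkovChain K μ) (D : Set Y) (hD : MeasurableSet D) (r : ℕ → ℝ)
    (vr : Y → ℝ≥0∞) (hvr : ∀ y, vr y = ∫⁻ ω, rEval r (hit D ω) ∂(μ y)) (y : Y) (k : ℕ) :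
    ∫⁻ ω, gD D k ω * vr (ω k) ∂(μ y)
      = ∫⁻ ω, gD D k ω * rEval r (hit D (theta k ω)) ∂(μ y) := by
  have hL : ∀ ω : ℕ → Y, gD D k ω * vr (ω k)
      = ∑' j : ℕ, ENNReal.ofReal (r j) * (gD D k ω * Phi K j (fD D j) (ω k)) := by
    intro ω
    rw [vr_eq hμ D hD r vr hvr (ω k), ← ENNReal.tsum_mul_left]
    congr 1
    funext j
    ring
  have hR : ∀ ω : ℕ → Y, gD D k ω * rEval r (hit D (theta k ω))
      = ∑' j : ℕ, ENNReal.ofReal (r j)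
          * (gD D k ω * ∏ i ∈ Finset.range (j+1), fD D j i (ω (k+i))) := by
    intro ω
    rw [rEval_theta_eq D r k ω, ← ENNReal.tsum_mul_left]
    congr 1
    funext j
    ring
  have hmPhi : ∀ j : ℕ, Measurable (fun ω : ℕ → Y => Phi K j (fD D j) (ω k)) := fun j =>
    (measurable_Phi K j (fD D j) (measurable_fD D hD j)).comp (measurable_pi_apply k)
  rw [lintegral_congr hL, lintegral_congr hR,
    lintegral_tsum (f := fun j ω => ENNReal.ofReal (r j) * (gD D k ω * Phi K j (fD D j) (ω k)))
      (fun j => (measurable_const.mul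
      ((measurable_gD D hD k).mul (hmPhi j))).aemeasurable),
    lintegral_tsum (f := fun j ω => ENNReal.ofReal (r j)
        * (gD D k ω * ∏ i ∈ Finset.range (j+1), fD D j i (ω (k+i))))
      (fun j => (measurable_const.mul
      ((measurable_gD D hD k).mul (measurable_prod_fD D hD j k))).aemeasurable)]
  congr 1
  funext j
  rw [lintegral_const_mul _ (f := fun ω => gD D k ω * Phi K j (fD D j) (ω k))
      ((measurable_gD D hD k).mul (hmPhi j)),
    lintegral_const_mul _ (f := fun ω => gD D k ω * ∏ i ∈ Finset.range (j+1), fD D j i (ω (k+i)))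
      ((measurable_gD D hD k).mul (measurable_prod_fD D hD j k)),
    markov_prod hμ j (fD D j) (measurable_fD D hD j) k (gD D k) (measurable_gD_comap D hD k) y]

/-- if the chain hits `D` a.s. from every starting point, then with
`v_r(y) = E_y[r(σ_D)]` one has `E_y[Σ_{k=0}^{σ_D} r(k)] = E_y[Σ_{k=0}^{σ_D} v_r(Y_k)]`. -/
theorem stmt4 (K : Kernel Y Y) [IsMarkovKernel K] (D : Set Y) (hD : MeasurableSet D)
    (r : ℕ → ℝ) (hr : ∀ k, 0 ≤ r k)
    (μ : Y → Measure (ℕ → Y)) (hμ : IsMarkovChain K μ)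
    (hhit : ∀ y : Y, μ y {ω | hit D ω < ⊤} = 1)
    (vr : Y → ℝ≥0∞) (hvr : ∀ y, vr y = ∫⁻ ω, rEval r (hit D ω) ∂(μ y)) :
    ∀ y : Y,
      ∫⁻ ω, ∑' k : ℕ, (if (k : ℕ∞) ≤ hit D ω then ENNReal.ofReal (r k) else 0) ∂(μ y) =
      ∫⁻ ω, ∑' k : ℕ, (if (k : ℕ∞) ≤ hit D ω then vr (ω k) else 0) ∂(μ y) := by
  intro y
  haveI := hμ.isProb y
  have hvrm : Measurable vr := by
    have : vr = fun z => ∑' j : ℕ, ENNReal.ofReal (r j) * Phi K j (fD D j) z :=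
      funext (vr_eq hμ D hD r vr hvr)
    rw [this]
    exact Measurable.ennreal_tsum (fun j => measurable_const.mul
      (measurable_Phi K j (fD D j) (measurable_fD D hD j)))
  -- rewrite both sides with `gD`
  have e1 : ∀ k : ℕ, (fun ω : ℕ → Y => if (k : ℕ∞) ≤ hit D ω then vr (ω k) else 0)
      = fun ω => gD D k ω * vr (ω k) := fun k => funext fun ω => ite_le_hit D k ω _
  have e2 : ∀ k : ℕ,
      (fun ω : ℕ → Y => if (k : ℕ∞) ≤ hit D ω then rEval r (hit D (theta k ω)) else 0)
      = fun ω => gD D k ω * rEval r (hit D (theta k ω)) := fun k => funext fun ω =>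
        ite_le_hit D k ω _
  have hmes1 : ∀ k : ℕ, Measurable (fun ω : ℕ → Y => gD D k ω * vr (ω k)) := fun k =>
    (measurable_gD D hD k).mul (hvrm.comp (measurable_pi_apply k))
  have hmes2 : ∀ k : ℕ,
      Measurable (fun ω : ℕ → Y => gD D k ω * rEval r (hit D (theta k ω))) := fun k =>
    (measurable_gD D hD k).mul (measurable_rEval_theta D hD r k)
  -- the a.e. finiteness of the hitting time
  have hS : MeasurableSet {ω : ℕ → Y | hit D ω < ⊤} := by
    have : {ω : ℕ → Y | hit D ω < ⊤} = ⋃ k, (fun ω : ℕ → Y => ω k) ⁻¹' D := by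
      ext ω
      simp only [Set.mem_setOf_eq, hit_lt_top_iff, Set.mem_iUnion, Set.mem_preimage]
    rw [this]
    exact MeasurableSet.iUnion (fun k => (measurable_pi_apply k) hD)
  have hae : ∀ᵐ ω ∂(μ y), hit D ω < ⊤ := by
    rw [ae_iff]
    have hcompl : {ω : ℕ → Y | ¬ hit D ω < ⊤} = {ω : ℕ → Y | hit D ω < ⊤}ᶜ := rfl
    rw [hcompl, measure_compl hS (measure_ne_top _ _), hhit y, measure_univ, tsub_self]
  -- pointwise identity on `{hit D < ⊤}`
  have hpt : ∀ ω : ℕ → Y, hit D ω < ⊤ →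
      (∑' k : ℕ, (if (k : ℕ∞) ≤ hit D ω then ENNReal.ofReal (r k) else 0))
        = ∑' k : ℕ, (if (k : ℕ∞) ≤ hit D ω then rEval r (hit D (theta k ω)) else 0) := by
    intro ω hω
    obtain ⟨N, hN⟩ := WithTop.ne_top_iff_exists.mp hω.ne
    have hle : ∀ k : ℕ, ((k : ℕ∞) ≤ hit D ω ↔ k ≤ N) := by
      intro k
      rw [← hN]
      exact_mod_cast Nat.cast_le
    have hz1 : ∀ k ∉ Finset.range (N+1),
        (if (k : ℕ∞) ≤ hit D ω then ENNReal.ofReal (r k) else 0) = 0 := by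
      intro k hk
      rw [if_neg]
      rw [hle k]
      exact fun hc => hk (Finset.mem_range.mpr (by omega))
    have hz2 : ∀ k ∉ Finset.range (N+1),
        (if (k : ℕ∞) ≤ hit D ω then rEval r (hit D (theta k ω)) else 0) = 0 := by
      intro k hk
      rw [if_neg]
      rw [hle k]
      exact fun hc => hk (Finset.mem_range.mpr (by omega))
    rw [tsum_eq_sum hz1, tsum_eq_sum hz2]
    have hterm : ∀ k ∈ Finset.range (N+1),
        (if (k : ℕ∞) ≤ hit D ω then rEval r (hit D (theta k ω)) else 0)
          = ENNReal.ofReal (r (N - k)) := by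
      intro k hk
      have hkN : k ≤ N := by
        have := Finset.mem_range.mp hk; omega
      rw [if_pos ((hle k).mpr hkN), hit_theta D ω k N hkN hN.symm]
      rfl
    rw [Finset.sum_congr rfl hterm]
    have hterm1 : ∀ k ∈ Finset.range (N+1),
        (if (k : ℕ∞) ≤ hit D ω then ENNReal.ofReal (r k) else 0) = ENNReal.ofReal (r k) := by
      intro k hk
      have hkN : k ≤ N := by
        have := Finset.mem_range.mp hk; omega
      rw [if_pos ((hle k).mpr hkN)]
    rw [Finset.sum_congr rfl hterm1]
    have := Finset.sum_range_reflect (fun k => ENNReal.ofReal (r k)) (N+1)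
    simp only [Nat.add_sub_cancel] at this
    exact this.symm
  -- assemble
  calc ∫⁻ ω, ∑' k : ℕ, (if (k : ℕ∞) ≤ hit D ω then ENNReal.ofReal (r k) else 0) ∂(μ y)
      = ∫⁻ ω, ∑' k : ℕ,
          (if (k : ℕ∞) ≤ hit D ω then rEval r (hit D (theta k ω)) else 0) ∂(μ y) :=
        lintegral_congr_ae (hae.mono (fun ω hω => hpt ω hω))
    _ = ∑' k : ℕ, ∫⁻ ω, gD D k ω * rEval r (hit D (theta k ω)) ∂(μ y) := by
        rw [← lintegral_tsum (fun k => (hmes2 k).aemeasurable)]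
        exact lintegral_congr (fun ω => by
          congr 1
          funext k
          exact ite_le_hit D k ω _)
    _ = ∑' k : ℕ, ∫⁻ ω, gD D k ω * vr (ω k) ∂(μ y) := by
        congr 1
        funext k
        exact (key_step hμ D hD r vr hvr y k).symm
    _ = ∫⁻ ω, ∑' k : ℕ, (if (k : ℕ∞) ≤ hit D ω then vr (ω k) else 0) ∂(μ y) := by
        rw [← lintegral_tsum (fun k => (hmes1 k).aemeasurable)]
        exact lintegral_congr (fun ω => by
          congr 1
          funext k
          exact (ite_le_hit D k ω _).symm)
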